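/- Fix integers d ≥ 2, N ≥ 1, K ≥ 1. Let J be a complex matrix indexed by pairs ((x,o),(x',o')) with x,x' : Fin N → Fin d and o,o' : Fin K → Fin d. If J is positive semidefinite and Tr_O(J) equals the identity matrix on (Fin N → Fin d), then Tr(J · Π_sym^{(N+K)}) ≤ d_S^N = binom(N+d-1, d-1). Equivalently, the average fidelity Tr(J · Π_sym^{(N+K)}/d_S^{N+K}) of any quantum channel (with Choi operator J) for converting N copies of a pure qudit state into K copies of its transpose is at most d_S^N / d_S^{N+K}. -/

import Mathlib

open Matrix Kronecker BigOperators ComplexOrder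

noncomputable section

/-- The matrix of the permutation `π ∈ S_M` acting on the `M` tensor factors of `(ℂ^d)^{⊗M}`. -/
def permMat (d M : ℕ) (π : Equiv.Perm (Fin M)) :
    Matrix (Fin M → Fin d) (Fin M → Fin d) ℂ :=
  Matrix.of fun x y => if x = y ∘ π.symm then 1 else 0

/-- The orthogonal projector onto the symmetric subspace of `(ℂ^d)^{⊗M}`. -/
def symProj (d M : ℕ) : Matrix (Fin M → Fin d) (Fin M → Fin d) ℂ :=
  ((M.factorial : ℂ))⁻¹ • ∑ π : Equiv.Perm (Fin M), permMat d M π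

/-- The dimension `d_S^M = binom(M+d-1, d-1)` of the symmetric subspace of `(ℂ^d)^{⊗M}`. -/
def dS (d M : ℕ) : ℕ := (M + d - 1).choose (d - 1)

/-- Regard a pair of tuples as a single tuple via `Fin (N+K) ≃ Fin N ⊕ Fin K`. -/
def pairToFun (d N K : ℕ) (x : Fin N → Fin d) (o : Fin K → Fin d) :
    Fin (N + K) → Fin d :=
  fun i => Sum.elim x o (finSumFinEquiv.symm i)

/-- The projector onto the symmetric subspace of `(ℂ^d)^{⊗(N+K)}`, regarded as a matrix
indexed by pairs `((x,o),(x',o'))`. -/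
def symProjNK (d N K : ℕ) :
    Matrix ((Fin N → Fin d) × (Fin K → Fin d)) ((Fin N → Fin d) × (Fin K → Fin d)) ℂ :=
  Matrix.of fun p q =>
    symProj d (N + K) (pairToFun d N K p.1 p.2) (pairToFun d N K q.1 q.2)

/-- Partial trace over the output (second) factor. -/
def trOut {d N K : ℕ}
    (J : Matrix ((Fin N → Fin d) × (Fin K → Fin d)) ((Fin N → Fin d) × (Fin K → Fin d)) ℂ) :
    Matrix (Fin N → Fin d) (Fin N → Fin d) ℂ :=
  Matrix.of fun x x' => ∑ o : Fin K → Fin d, J (x, o) (x', o)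

variable {d M : ℕ}

lemma permMat_mul (σ τ : Equiv.Perm (Fin M)) :
    permMat d M σ * permMat d M τ = permMat d M (σ * τ) := by
  ext x y
  simp only [Matrix.mul_apply, permMat, Matrix.of_apply, mul_ite, mul_one, mul_zero]
  rw [Finset.sum_ite_eq' Finset.univ (y ∘ ⇑τ.symm) (fun w => if x = w ∘ ⇑σ.symm then (1:ℂ) else 0)]
  simp only [Finset.mem_univ, if_true]
  rfl

lemma permMat_conjTranspose (σ : Equiv.Perm (Fin M)) :
    (permMat d M σ)ᴴ = permMat d M σ⁻¹ := by
  ext x y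
  simp only [Matrix.conjTranspose_apply, permMat, Matrix.of_apply, apply_ite (star : ℂ → ℂ),
    star_one, star_zero]
  by_cases h : y = x ∘ ⇑σ.symm
  · rw [if_pos h, if_pos]
    funext i
    rw [h]
    simp [Equiv.Perm.inv_def]
  · rw [if_neg h, if_neg]
    intro hx
    apply h
    funext i
    rw [hx]
    simp [Equiv.Perm.inv_def]

lemma factorial_ne_zero' : ((M.factorial : ℂ)) ≠ 0 := by
  exact_mod_cast M.factorial_ne_zero


lemma psd_diag {n : Type*} [Fintype n] [DecidableEq n] {A : Matrix n n ℂ}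
    (hA : A.PosSemidef) (i : n) : 0 ≤ A i i := by
  exact hA.diag_nonneg

lemma psd_trace_nonneg {n : Type*} [Fintype n] [DecidableEq n] {A : Matrix n n ℂ}
    (hA : A.PosSemidef) : 0 ≤ A.trace :=
  Finset.sum_nonneg fun i _ => psd_diag hA i

open scoped MatrixOrder in
lemma psd_trace_mul_nonneg {n : Type*} [Fintype n] [DecidableEq n] {A B : Matrix n n ℂ}
    (hA : A.PosSemidef) (hB : B.PosSemidef) : 0 ≤ (A * B).trace := by
  obtain ⟨C, rfl⟩ := CStarAlgebra.nonneg_iff_eq_star_mul_self.mp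
    ((Matrix.nonneg_iff_posSemidef (𝕜 := ℂ)).mpr hB)
  rw [← Matrix.mul_assoc, Matrix.trace_mul_comm, ← Matrix.mul_assoc, Matrix.star_eq_conjTranspose]
  exact psd_trace_nonneg (hA.mul_mul_conjTranspose_same _)

lemma permMat_mul_symProj (τ : Equiv.Perm (Fin M)) :
    permMat d M τ * symProj d M = symProj d M := by
  rw [symProj, Matrix.mul_smul, Matrix.mul_sum]
  congr 1
  calc ∑ σ : Equiv.Perm (Fin M), permMat d M τ * permMat d M σ
      = ∑ σ : Equiv.Perm (Fin M), permMat d M (τ * σ) := by simp [permMat_mul]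
    _ = ∑ σ : Equiv.Perm (Fin M), permMat d M σ :=
        Fintype.sum_equiv (Equiv.mulLeft τ) _ _ (fun σ => rfl)

lemma symProj_mul_permMat (τ : Equiv.Perm (Fin M)) :
    symProj d M * permMat d M τ = symProj d M := by
  rw [symProj, Matrix.smul_mul, Matrix.sum_mul]
  congr 1
  calc ∑ σ : Equiv.Perm (Fin M), permMat d M σ * permMat d M τ
      = ∑ σ : Equiv.Perm (Fin M), permMat d M (σ * τ) := by simp [permMat_mul]
    _ = ∑ σ : Equiv.Perm (Fin M), permMat d M σ :=
        Fintype.sum_equiv (Equiv.mulRight τ) _ _ (fun σ => rfl)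

lemma symProj_isHermitian : (symProj d M).IsHermitian := by
  show _ = _
  rw [symProj, Matrix.conjTranspose_smul, Matrix.conjTranspose_sum]
  congr 1
  · simp
  · simp only [permMat_conjTranspose]
    exact Fintype.sum_equiv (Equiv.inv (Equiv.Perm (Fin M))) _ _ (fun σ => rfl)

lemma symProj_idem : symProj d M * symProj d M = symProj d M := by
  nth_rewrite 1 [symProj]
  rw [Matrix.smul_mul, Matrix.sum_mul]
  simp only [permMat_mul_symProj]
  rw [Finset.sum_const, Finset.card_univ, Fintype.card_perm, Fintype.card_fin]
  rw [← Nat.cast_smul_eq_nsmul ℂ, smul_smul, inv_mul_cancel₀ factorial_ne_zero', one_smul]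

def embPerm (N K : ℕ) (π : Equiv.Perm (Fin N)) : Equiv.Perm (Fin (N + K)) :=
  (finSumFinEquiv.symm.trans ((Equiv.sumCongr π (Equiv.refl (Fin K))).trans finSumFinEquiv))

lemma embPerm_mul (N K : ℕ) (π ρ : Equiv.Perm (Fin N)) :
    embPerm N K (π * ρ) = embPerm N K π * embPerm N K ρ := by
  ext i
  simp only [embPerm, Equiv.trans_apply, Equiv.Perm.mul_apply, Equiv.symm_apply_apply]
  cases finSumFinEquiv.symm i <;> simp

lemma embPerm_one (N K : ℕ) : embPerm N K 1 = 1 := by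
  ext i
  simp [embPerm, Equiv.Perm.one_def]

lemma embPerm_inv (N K : ℕ) (π : Equiv.Perm (Fin N)) :
    (embPerm N K π)⁻¹ = embPerm N K π⁻¹ := by
  apply inv_eq_of_mul_eq_one_right
  rw [← embPerm_mul, mul_inv_cancel, embPerm_one]

def PNmat (d N K : ℕ) : Matrix (Fin (N + K) → Fin d) (Fin (N + K) → Fin d) ℂ :=
  ((N.factorial : ℂ))⁻¹ • ∑ π : Equiv.Perm (Fin N), permMat d (N + K) (embPerm N K π)

lemma PNmat_isHermitian (d N K : ℕ) : (PNmat d N K).IsHermitian := by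
  show _ = _
  rw [PNmat, Matrix.conjTranspose_smul, Matrix.conjTranspose_sum]
  congr 1
  · simp
  · simp only [permMat_conjTranspose, embPerm_inv]
    exact Fintype.sum_equiv (Equiv.inv (Equiv.Perm (Fin N))) _ _ (fun σ => rfl)

lemma PNmat_idem (d N K : ℕ) : PNmat d N K * PNmat d N K = PNmat d N K := by
  nth_rewrite 2 [PNmat]
  rw [Matrix.mul_smul, Matrix.mul_sum]
  have h : ∀ ρ : Equiv.Perm (Fin N),
      PNmat d N K * permMat d (N + K) (embPerm N K ρ) = PNmat d N K := by
    intro ρ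
    rw [PNmat, Matrix.smul_mul, Matrix.sum_mul]
    congr 1
    calc ∑ σ : Equiv.Perm (Fin N), permMat d (N+K) (embPerm N K σ) * permMat d (N+K) (embPerm N K ρ)
        = ∑ σ : Equiv.Perm (Fin N), permMat d (N+K) (embPerm N K (σ * ρ)) := by
          simp [permMat_mul, embPerm_mul]
      _ = ∑ σ : Equiv.Perm (Fin N), permMat d (N+K) (embPerm N K σ) :=
          Fintype.sum_equiv (Equiv.mulRight ρ) _ _ (fun σ => rfl)
  simp only [h]
  rw [Finset.sum_const, Finset.card_univ, Fintype.card_perm, Fintype.card_fin]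
  rw [← Nat.cast_smul_eq_nsmul ℂ, smul_smul, inv_mul_cancel₀ factorial_ne_zero', one_smul]

lemma PNmat_mul_symProj (d N K : ℕ) : PNmat d N K * symProj d (N + K) = symProj d (N + K) := by
  rw [PNmat, Matrix.smul_mul, Matrix.sum_mul]
  simp only [permMat_mul_symProj]
  rw [Finset.sum_const, Finset.card_univ, Fintype.card_perm, Fintype.card_fin]
  rw [← Nat.cast_smul_eq_nsmul ℂ, smul_smul, inv_mul_cancel₀ factorial_ne_zero', one_smul]

lemma symProj_mul_PNmat (d N K : ℕ) : symProj d (N + K) * PNmat d N K = symProj d (N + K) := by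
  rw [PNmat, Matrix.mul_smul, Matrix.mul_sum]
  simp only [symProj_mul_permMat]
  rw [Finset.sum_const, Finset.card_univ, Fintype.card_perm, Fintype.card_fin]
  rw [← Nat.cast_smul_eq_nsmul ℂ, smul_smul, inv_mul_cancel₀ factorial_ne_zero', one_smul]

lemma diff_posSemidef (d N K : ℕ) : (PNmat d N K - symProj d (N + K)).PosSemidef := by
  have herm : (PNmat d N K - symProj d (N + K)).IsHermitian :=
    (PNmat_isHermitian d N K).sub symProj_isHermitian
  have idem : (PNmat d N K - symProj d (N + K)) * (PNmat d N K - symProj d (N + K))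
      = PNmat d N K - symProj d (N + K) := by
    rw [sub_mul, mul_sub, mul_sub, PNmat_idem, PNmat_mul_symProj, symProj_mul_PNmat, symProj_idem]
    abel
  have := Matrix.posSemidef_conjTranspose_mul_self (PNmat d N K - symProj d (N + K))
  rwa [herm.eq, idem] at this

section Burnside

variable {d N : ℕ}

def multisetOf (f : Fin N → Fin d) : Sym (Fin d) N :=
  ⟨Finset.univ.val.map f, by simp⟩

lemma multisetOf_comp (f : Fin N → Fin d) (π : Equiv.Perm (Fin N)) :
    multisetOf (f ∘ ⇑π) = multisetOf f := by
  apply Subtype.ext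
  show Finset.univ.val.map (f ∘ ⇑π) = Finset.univ.val.map f
  rw [← Multiset.map_map, Multiset.map_univ_val_equiv]

lemma exists_perm_of_multisetOf_eq {f g : Fin N → Fin d} (h : multisetOf f = multisetOf g) :
    ∃ π : Equiv.Perm (Fin N), g ∘ ⇑π = f := by
  classical
  have hcount : ∀ v : Fin d, Fintype.card {i // f i = v} = Fintype.card {i // g i = v} := by
    intro v
    have h1 : Multiset.count v (Finset.univ.val.map f)
        = Multiset.count v (Finset.univ.val.map g) := by
      rw [← Sym.coe_inj] at h
      exact congrArg _ h
    rw [Multiset.count_map, Multiset.count_map] at h1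
    have e1 : ∀ (u : Fin N → Fin d), Fintype.card {i // u i = v}
        = Multiset.card (Finset.univ.val.filter fun a => v = u a) := by
      intro u
      rw [Fintype.card_subtype]
      rw [Finset.card_def, Finset.filter_val]
      congr 1
      apply Multiset.filter_congr
      intro i _
      constructor
      · exact fun hh => hh.symm
      · exact fun hh => hh.symm
    rw [e1 f, e1 g, h1]
  let e : ∀ v : Fin d, {i // f i = v} ≃ {i // g i = v} :=
    fun v => Fintype.equivOfCardEq (hcount v)
  refine ⟨Equiv.ofFiberEquiv e, ?_⟩
  funext i
  exact Equiv.ofFiberEquiv_map e i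

lemma multisetOf_surjective : Function.Surjective (multisetOf (d := d) (N := N)) := by
  rintro ⟨m, hm⟩
  have hl : m.toList.length = N := by rw [Multiset.length_toList]; exact hm
  refine ⟨fun i => m.toList.get (Fin.cast hl.symm i), ?_⟩
  apply Subtype.ext
  show (Finset.univ.val.map (fun i : Fin N => m.toList.get (Fin.cast hl.symm i))
      : Multiset (Fin d)) = m
  rw [Fin.univ_val_map]
  have h2 : List.ofFn (fun i : Fin N => m.toList.get (Fin.cast hl.symm i)) = m.toList := by
    rw [← List.ofFn_congr hl m.toList.get]
    exact List.ofFn_get _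
  rw [h2, Multiset.coe_toList]

lemma burnside_count (hd : 1 ≤ d) :
    ∑ π : Equiv.Perm (Fin N), (Fintype.card {x : Fin N → Fin d // x ∘ ⇑π = x})
      = (N + d - 1).choose (d - 1) * N.factorial := by
  classical
  letI : Fintype ((Equiv.Perm (Fin N))ᵈᵐᵃ) :=
    Fintype.ofEquiv _ (DomMulAct.mk (M := Equiv.Perm (Fin N)))
  have hresp : ∀ a b : Fin N → Fin d,
      (MulAction.orbitRel ((Equiv.Perm (Fin N))ᵈᵐᵃ) (Fin N → Fin d)).r a b →
        multisetOf a = multisetOf b := by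
    intro a b hab
    obtain ⟨g, hg⟩ := hab
    rw [← hg]
    exact multisetOf_comp b (DomMulAct.mk.symm g)
  have hbij : Function.Bijective
      (Quotient.lift (multisetOf (d := d) (N := N)) hresp :
        Quotient (MulAction.orbitRel ((Equiv.Perm (Fin N))ᵈᵐᵃ) (Fin N → Fin d))
          → Sym (Fin d) N) := by
    constructor
    · intro q1 q2
      refine Quotient.inductionOn₂ q1 q2 ?_
      intro a b h
      simp only [Quotient.lift_mk] at h
      obtain ⟨π, hπ⟩ := exists_perm_of_multisetOf_eq h
      apply Quotient.sound
      exact ⟨DomMulAct.mk π, hπ⟩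
    · intro s
      obtain ⟨f, hf⟩ := multisetOf_surjective s
      exact ⟨⟦f⟧, hf⟩
  have key := MulAction.sum_card_fixedBy_eq_card_orbits_mul_card_group
    ((Equiv.Perm (Fin N))ᵈᵐᵃ) (Fin N → Fin d)
  have hleft : ∑ π : Equiv.Perm (Fin N), (Fintype.card {x : Fin N → Fin d // x ∘ ⇑π = x})
      = ∑ a : (Equiv.Perm (Fin N))ᵈᵐᵃ,
          Fintype.card (MulAction.fixedBy (Fin N → Fin d) a) := by
    apply Fintype.sum_equiv (DomMulAct.mk (M := Equiv.Perm (Fin N)))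
    intro π
    apply Fintype.card_congr
    exact Equiv.subtypeEquivRight (fun x => Iff.rfl)
  have hOmega : Fintype.card
        (Quotient (MulAction.orbitRel ((Equiv.Perm (Fin N))ᵈᵐᵃ) (Fin N → Fin d)))
      = (N + d - 1).choose (d - 1) := by
    rw [Fintype.card_of_bijective hbij, Sym.card_sym_eq_multichoose, Nat.multichoose_eq,
      Fintype.card_fin]
    have h1 : d + N - 1 = N + d - 1 := by omega
    rw [h1]
    have h2 : N ≤ N + d - 1 := by omega
    have h3 : N + d - 1 - N = d - 1 := by omega
    rw [← Nat.choose_symm h2, h3]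
  have hG : Fintype.card ((Equiv.Perm (Fin N))ᵈᵐᵃ) = N.factorial := by
    rw [Fintype.card_congr (DomMulAct.mk (M := Equiv.Perm (Fin N))).symm,
      Fintype.card_perm, Fintype.card_fin]
  rw [hleft, key, hOmega, hG]

end Burnside


def pairEquiv (d N K : ℕ) : ((Fin N → Fin d) × (Fin K → Fin d)) ≃ (Fin (N + K) → Fin d) :=
  (Equiv.sumArrowEquivProdArrow (Fin N) (Fin K) (Fin d)).symm.trans
    (Equiv.arrowCongr finSumFinEquiv (Equiv.refl (Fin d)))

lemma pairEquiv_apply {d N K : ℕ} (p : (Fin N → Fin d) × (Fin K → Fin d)) :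
    pairEquiv d N K p = pairToFun d N K p.1 p.2 := by
  funext i
  rfl

lemma pairToFun_comp {d N K : ℕ} (x : Fin N → Fin d) (o : Fin K → Fin d)
    (π : Equiv.Perm (Fin N)) :
    pairToFun d N K x o ∘ ⇑(embPerm N K π).symm = pairToFun d N K (x ∘ ⇑π.symm) o := by
  funext i
  show Sum.elim x o (finSumFinEquiv.symm ((embPerm N K π).symm i)) = _
  have h1 : (embPerm N K π).symm i
      = finSumFinEquiv ((Equiv.sumCongr π (Equiv.refl (Fin K))).symm (finSumFinEquiv.symm i)) :=
    rfl
  rw [h1, Equiv.symm_apply_apply]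
  show Sum.elim x o ((Equiv.sumCongr π (Equiv.refl (Fin K))).symm (finSumFinEquiv.symm i))
      = Sum.elim (x ∘ ⇑π.symm) o (finSumFinEquiv.symm i)
  cases finSumFinEquiv.symm i <;> rfl

lemma trace_submatrix_equiv' {m n : Type*} [Fintype m] [Fintype n] [DecidableEq m]
    [DecidableEq n] (e : m ≃ n) (A : Matrix n n ℂ) :
    (A.submatrix e e).trace = A.trace :=
  Fintype.sum_equiv e _ _ (fun i => rfl)

/-- The average fidelity of any `N → K` transposition channel, with Choi operator `J`,
is at most `d_S^N / d_S^{N+K}`; equivalently `Tr(J Π_sym^{(N+K)}) ≤ d_S^N`. -/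
theorem stmt0 (d N K : ℕ) (hd : 2 ≤ d) (hN : 1 ≤ N) (hK : 1 ≤ K)
    (J : Matrix ((Fin N → Fin d) × (Fin K → Fin d)) ((Fin N → Fin d) × (Fin K → Fin d)) ℂ)
    (hpsd : J.PosSemidef) (htp : trOut J = 1) :
    (J * symProjNK d N K).trace ≤ (dS d N : ℂ) := by
  classical
  set e := pairEquiv d N K with he
  have hsym : symProjNK d N K = (symProj d (N + K)).submatrix e e := by
    ext p q
    simp only [symProjNK, Matrix.of_apply, Matrix.submatrix_apply, he, pairEquiv_apply]
  set J' : Matrix (Fin (N + K) → Fin d) (Fin (N + K) → Fin d) ℂ :=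
    J.submatrix e.symm e.symm with hJ'def
  have hJrw : J = J'.submatrix e e := by
    ext p q
    simp [hJ'def, Matrix.submatrix_apply]
  have hJ'psd : J'.PosSemidef := hpsd.submatrix _
  have hJ'app : ∀ p q, J' (e p) (e q) = J p q := by
    intro p q
    simp [hJ'def, Matrix.submatrix_apply]
  have htr : (J * symProjNK d N K).trace = (J' * symProj d (N + K)).trace := by
    rw [hJrw, hsym, Matrix.submatrix_mul_equiv, trace_submatrix_equiv']
  -- trace against each permutation matrix
  have hterm : ∀ π : Equiv.Perm (Fin N),
      (J' * permMat d (N + K) (embPerm N K π)).trace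
        = ((Fintype.card {x : Fin N → Fin d // x ∘ ⇑π = x} : ℕ) : ℂ) := by
    intro π
    have step1 : (J' * permMat d (N + K) (embPerm N K π)).trace
        = ∑ z : Fin (N + K) → Fin d, J' z (z ∘ ⇑(embPerm N K π).symm) := by
      rw [Matrix.trace]
      apply Finset.sum_congr rfl
      intro z _
      show ∑ w, J' z w * permMat d (N + K) (embPerm N K π) w z = _
      simp only [permMat, Matrix.of_apply, mul_ite, mul_one, mul_zero]
      rw [Finset.sum_ite_eq' Finset.univ (z ∘ ⇑(embPerm N K π).symm) (fun w => J' z w)]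
      simp
    have step2 : ∑ z : Fin (N + K) → Fin d, J' z (z ∘ ⇑(embPerm N K π).symm)
        = ∑ p : (Fin N → Fin d) × (Fin K → Fin d), J (p.1, p.2) (p.1 ∘ ⇑π.symm, p.2) := by
      symm
      apply Fintype.sum_equiv e
      intro p
      have h1 : e p ∘ ⇑(embPerm N K π).symm = e (p.1 ∘ ⇑π.symm, p.2) := by
        rw [he, pairEquiv_apply, pairEquiv_apply]
        exact pairToFun_comp p.1 p.2 π
      rw [h1]
      rw [show ((p.1 ∘ ⇑π.symm, p.2) : (Fin N → Fin d) × (Fin K → Fin d))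
        = ((p.1 ∘ ⇑π.symm, p.2) : (Fin N → Fin d) × (Fin K → Fin d)) from rfl]
      rw [hJ'app p (p.1 ∘ ⇑π.symm, p.2)]
    have step3 : ∑ p : (Fin N → Fin d) × (Fin K → Fin d), J (p.1, p.2) (p.1 ∘ ⇑π.symm, p.2)
        = ∑ x : Fin N → Fin d, (trOut J) x (x ∘ ⇑π.symm) := by
      rw [Fintype.sum_prod_type]
      rfl
    rw [step1, step2, step3, htp]
    have step4 : ∑ x : Fin N → Fin d, (1 : Matrix (Fin N → Fin d) (Fin N → Fin d) ℂ)
        x (x ∘ ⇑π.symm) = ∑ x : Fin N → Fin d, (if x = x ∘ ⇑π.symm then (1:ℂ) else 0) := by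
      apply Finset.sum_congr rfl
      intro x _
      rw [Matrix.one_apply]
    rw [step4, Finset.sum_boole]
    have hiff : ∀ x : Fin N → Fin d, (x = x ∘ ⇑π.symm) ↔ (x ∘ ⇑π = x) := by
      intro x
      constructor
      · intro hx
        funext i
        simpa using congrFun hx (π i)
      · intro hb
        funext i
        simpa using congrFun hb (π.symm i)
    congr 1
    rw [Fintype.card_subtype]
    congr 1
    apply Finset.filter_congr
    intro x _
    exact hiff x
  -- trace against PN equals dS
  have hPtrace : (J' * PNmat d N K).trace = (dS d N : ℂ) := by
    rw [PNmat, Matrix.mul_smul, Matrix.mul_sum, Matrix.trace_smul, Matrix.trace_sum]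
    simp only [hterm]
    rw [← Nat.cast_sum]
    rw [burnside_count (by omega : 1 ≤ d)]
    push_cast
    rw [smul_eq_mul]
    field_simp [dS]
    rfl
  -- conclude
  have hdiff := diff_posSemidef d N K
  have h0 : 0 ≤ (J' * (PNmat d N K - symProj d (N + K))).trace :=
    psd_trace_mul_nonneg hJ'psd hdiff
  rw [Matrix.mul_sub, Matrix.trace_sub, sub_nonneg] at h0
  rw [htr]
  calc (J' * symProj d (N + K)).trace ≤ (J' * PNmat d N K).trace := h0
    _ = (dS d N : ℂ) := hPtrace

end
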